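/- Let G be a connected weighted graph, (A, V\A) an unweighted cut of neighbourhood diversity at most k, and H_B the gadget graph built from G \ A by adding vertices a_{ij}. Then for every B' ⊆ V \ A: (i) if B' is a k-module of G then B' is a k-module of H_B; and (ii) if A ∪ B' is a k-module of G, then B' ∪ { a_{ij} : 1 ≤ i,j ≤ k' } is a k-module of H_B. -/

import Mathlib

open scoped Classical

variable {V : Type*}

/-- `M` is a `k`-module of the graph `H`: it can be partitioned into (at most) `k` parts
such that within each part all vertices have identical neighbourhoods outside `M`. -/
def IsKModule {α : Type*} (H : SimpleGraph α) (k : ℕ) (M : Set α) : Prop :=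
  ∃ P : Fin k → Set α, (⋃ i, P i) = M ∧
    (∀ i j, i ≠ j → Disjoint (P i) (P j)) ∧
    ∀ i, ∀ u ∈ P i, ∀ v ∈ P i, ∀ x ∉ M, (H.Adj u x ↔ H.Adj v x)

/-- The underlying relation of the gadget graph `H_B` (Definition 4.2): on `G \ A`
(the vertices of `A` are kept as isolated junk vertices) we add fresh vertices
`a_{ij} = inr (i,j)` for the parts `A_i` with `B_i ≠ ∅`; each `a_{ij}` is joined to all
of `B_i`, and `a_{ij}` is joined to `a_{ji}` for `i ≠ j`. -/
def gadgetRelB {k : ℕ} (G : SimpleGraph V) (A : Set V) (B : Fin k → Set V) :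
    (V ⊕ Fin k × Fin k) → (V ⊕ Fin k × Fin k) → Prop
  | Sum.inl u, Sum.inl v => u ∉ A ∧ v ∉ A ∧ G.Adj u v
  | Sum.inl u, Sum.inr (i, _) => u ∈ B i
  | Sum.inr (i, j), Sum.inr (i', j') =>
      i' = j ∧ j' = i ∧ i ≠ j ∧ (B i).Nonempty ∧ (B j).Nonempty
  | _, _ => False

/-- The gadget graph `H_B` of Definition 4.2. -/
def gadgetB {k : ℕ} (G : SimpleGraph V) (A : Set V) (B : Fin k → Set V) :
    SimpleGraph (V ⊕ Fin k × Fin k) :=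
  SimpleGraph.fromRel (gadgetRelB G A B)

lemma gadget_adj_inl_inl {k : ℕ} (G : SimpleGraph V) (A : Set V) (B : Fin k → Set V)
    (u w : V) :
    (gadgetB G A B).Adj (Sum.inl u) (Sum.inl w) ↔ u ∉ A ∧ w ∉ A ∧ G.Adj u w := by
  simp only [gadgetB, SimpleGraph.fromRel_adj, gadgetRelB]
  constructor
  · rintro ⟨hne, h | h⟩
    · exact h
    · exact ⟨h.2.1, h.1, h.2.2.symm⟩
  · rintro ⟨hu, hw, hadj⟩
    exact ⟨fun h => hadj.ne (Sum.inl.inj h), Or.inl ⟨hu, hw, hadj⟩⟩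

lemma gadget_adj_inl_inr {k : ℕ} (G : SimpleGraph V) (A : Set V) (B : Fin k → Set V)
    (u : V) (i j : Fin k) :
    (gadgetB G A B).Adj (Sum.inl u) (Sum.inr (i, j)) ↔ u ∈ B i := by
  simp only [gadgetB, SimpleGraph.fromRel_adj, gadgetRelB]
  constructor
  · rintro ⟨hne, h | h⟩
    · exact h
    · exact h.elim
  · intro h
    exact ⟨fun hh => Sum.inl_ne_inr hh, Or.inl h⟩

lemma gadget_not_adj_inr {k : ℕ} (G : SimpleGraph V) (A : Set V) (B : Fin k → Set V)
    (i j : Fin k) (hBi : ¬ (B i).Nonempty) (x : V ⊕ Fin k × Fin k) :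
    ¬ (gadgetB G A B).Adj x (Sum.inr (i, j)) := by
  intro h
  rcases x with u | ⟨i', j'⟩
  · exact hBi ⟨u, (gadget_adj_inl_inr G A B u i j).mp h⟩
  · simp only [gadgetB, SimpleGraph.fromRel_adj, gadgetRelB] at h
    rcases h with ⟨-, h | h⟩
    · rcases h with ⟨rfl, -, -, -, hne⟩
      exact hBi hne
    · rcases h with ⟨-, -, -, hne, -⟩
      exact hBi hne

/-- **Lemma 4.5 (2).** Let `(A, V \ A)` be an unweighted cut of neighbourhood diversity
at most `k` of a connected graph `G`, with minimal partition `A_1, …, A_k` of `A` and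
`B_i = N_G(A_i) \ A`, and let `H_B` be the gadget graph of Definition 4.2.  Then for
every `B' ⊆ V \ A`: (i) if `B'` is a `k`-module of `G` then it is a `k`-module of `H_B`;
and (ii) if `A ∪ B'` is a `k`-module of `G`, then `B' ∪ { a_{ij} : 1 ≤ i,j ≤ k' }` is a
`k`-module of `H_B` (where the `a_{ij}` range over the parts with `B_i ≠ ∅`). -/
theorem gadgetB_preserves_kmodules [Fintype V] (G : SimpleGraph V) (hG : G.Connected)
    (A : Set V) (k : ℕ) (Apart : Fin k → Set V)
    (hcover : (⋃ i, Apart i) = A)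
    (hne : ∀ i, (Apart i).Nonempty)
    (hdisj : ∀ i j, i ≠ j → Disjoint (Apart i) (Apart j))
    (hmod : ∀ i, ∀ u ∈ Apart i, ∀ v ∈ Apart i, ∀ x ∉ A, (G.Adj u x ↔ G.Adj v x))
    (hmin : ∀ i j, i ≠ j →
      ∃ u ∈ Apart i, ∃ v ∈ Apart j, ∃ x ∉ A, ¬ (G.Adj u x ↔ G.Adj v x))
    (B : Fin k → Set V) (hB : ∀ i, B i = {x | x ∉ A ∧ ∃ a ∈ Apart i, G.Adj a x})
    (B' : Set V) (hB' : B' ⊆ Aᶜ) :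
    (IsKModule G k B' → IsKModule (gadgetB G A B) k (Sum.inl '' B')) ∧
      (IsKModule G k (A ∪ B') →
        IsKModule (gadgetB G A B) k
          (Sum.inl '' B' ∪ {x | ∃ i j : Fin k, x = Sum.inr (i, j) ∧ (B i).Nonempty})) := by
  -- membership in `B i` is equivalent to adjacency to any fixed element of `Apart i`
  have memB : ∀ i, ∀ a ∈ Apart i, ∀ x, x ∉ A → (x ∈ B i ↔ G.Adj a x) := by
    intro i a ha x hx
    rw [hB]
    simp only [Set.mem_setOf_eq]
    constructor
    · rintro ⟨-, a', ha', hadj⟩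
      exact (hmod i a' ha' a ha x hx).mp hadj
    · intro h
      exact ⟨hx, a, ha, h⟩
  constructor
  · -- part (i)
    rintro ⟨P, hPcov, hPdisj, hPmod⟩
    refine ⟨fun s => Sum.inl '' P s, ?_, ?_, ?_⟩
    · rw [← Set.image_iUnion, hPcov]
    · intro s s' hss'
      exact Set.disjoint_image_of_injective Sum.inl_injective (hPdisj s s' hss')
    · rintro s _ ⟨u, hu, rfl⟩ _ ⟨v, hv, rfl⟩ x hx
      have huB : u ∈ B' := by rw [← hPcov]; exact Set.mem_iUnion_of_mem s hu
      have hvB : v ∈ B' := by rw [← hPcov]; exact Set.mem_iUnion_of_mem s hv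
      have huA : u ∉ A := hB' huB
      have hvA : v ∉ A := hB' hvB
      rcases x with w | ⟨i0, j0⟩
      · have hwB' : w ∉ B' := fun h => hx ⟨w, h, rfl⟩
        rw [gadget_adj_inl_inl, gadget_adj_inl_inl]
        by_cases hwA : w ∈ A
        · simp [hwA]
        · have := hPmod s u hu v hv w hwB'
          simp [huA, hvA, hwA, this]
      · rw [gadget_adj_inl_inr, gadget_adj_inl_inr]
        obtain ⟨a, ha⟩ := hne i0
        have haA : a ∈ A := by rw [← hcover]; exact Set.mem_iUnion_of_mem i0 ha
        have haB' : a ∉ B' := fun h => hB' h haA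
        rw [memB i0 a ha u huA, memB i0 a ha v hvA, G.adj_comm a u, G.adj_comm a v]
        exact hPmod s u hu v hv a haB'
  · -- part (ii)
    rintro ⟨P, hPcov, hPdisj, hPmod⟩
    choose rep hrep using hne
    have repA : ∀ i, rep i ∈ A := fun i => by
      rw [← hcover]; exact Set.mem_iUnion_of_mem i (hrep i)
    have : ∀ i, ∃ s, rep i ∈ P s := fun i =>
      Set.mem_iUnion.mp (by rw [hPcov]; exact Or.inl (repA i))
    choose t ht using this
    refine ⟨fun s => Sum.inl '' (P s ∩ B') ∪
      {x | ∃ i j : Fin k, x = Sum.inr (i, j) ∧ (B i).Nonempty ∧ t i = s}, ?_, ?_, ?_⟩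
    · ext x
      simp only [Set.mem_iUnion, Set.mem_union, Set.mem_image, Set.mem_setOf_eq,
        Set.mem_inter_iff]
      constructor
      · rintro ⟨s, ⟨p, ⟨hp, hpB⟩, rfl⟩ | ⟨i, j, rfl, hne', -⟩⟩
        · exact Or.inl ⟨p, hpB, rfl⟩
        · exact Or.inr ⟨i, j, rfl, hne'⟩
      · rintro (⟨p, hpB, rfl⟩ | ⟨i, j, rfl, hne'⟩)
        · have hp : p ∈ ⋃ s, P s := by rw [hPcov]; exact Or.inr hpB
          obtain ⟨s, hs⟩ := Set.mem_iUnion.mp hp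
          exact ⟨s, Or.inl ⟨p, ⟨hs, hpB⟩, rfl⟩⟩
        · exact ⟨t i, Or.inr ⟨i, j, rfl, hne', rfl⟩⟩
    · intro s s' hss'
      rw [Set.disjoint_left]
      rintro x (⟨p, ⟨hp, -⟩, rfl⟩ | ⟨i, j, rfl, -, rfl⟩)
      · rintro (⟨q, ⟨hq, -⟩, h⟩ | ⟨i', j', h, -, -⟩)
        · cases Sum.inl.inj h
          exact Set.disjoint_left.mp (hPdisj s s' hss') hp hq
        · exact Sum.inl_ne_inr h
      · rintro (⟨q, -, h⟩ | ⟨i', j', h, -, ht'⟩)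
        · exact Sum.inl_ne_inr h
        · cases Sum.inr.inj h
          exact hss' ht'
    · intro s u hu v hv x hx
      -- every vertex of the part has a "representative" in `P s`
      have key : ∀ y, y ∈ Sum.inl '' (P s ∩ B') ∪
          {x | ∃ i j : Fin k, x = Sum.inr (i, j) ∧ (B i).Nonempty ∧ t i = s} →
          ∃ p ∈ P s, ∀ w : V,
            ((gadgetB G A B).Adj y (Sum.inl w) ↔ w ∉ A ∧ G.Adj p w) := by
        rintro y (⟨p, ⟨hp, hpB⟩, rfl⟩ | ⟨i, j, rfl, hBne, hti⟩)
        · refine ⟨p, hp, fun w => ?_⟩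
          rw [gadget_adj_inl_inl]
          have hpA : p ∉ A := hB' hpB
          exact ⟨fun h => ⟨h.2.1, h.2.2⟩, fun h => ⟨hpA, h.1, h.2⟩⟩
        · refine ⟨rep i, hti ▸ ht i, fun w => ?_⟩
          rw [(gadgetB G A B).adj_comm, gadget_adj_inl_inr]
          constructor
          · intro hw
            have hwA : w ∉ A := by
              have := hB i ▸ hw
              exact this.1
            exact ⟨hwA, (memB i (rep i) (hrep i) w hwA).mp hw⟩
          · rintro ⟨hwA, hadj⟩
            exact (memB i (rep i) (hrep i) w hwA).mpr hadj
      obtain ⟨pu, hpu, hadjU⟩ := key u hu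
      obtain ⟨pv, hpv, hadjV⟩ := key v hv
      rcases x with w | ⟨i0, j0⟩
      · have hwB' : w ∉ B' := fun h => hx (Or.inl ⟨w, h, rfl⟩)
        rw [hadjU w, hadjV w]
        by_cases hwA : w ∈ A
        · simp [hwA]
        · have hwM : w ∉ A ∪ B' := fun h => h.elim hwA hwB'
          have := hPmod s pu hpu pv hpv w hwM
          simp [hwA, this]
      · have hBne : ¬ (B i0).Nonempty := fun h => hx (Or.inr ⟨i0, j0, rfl, h⟩)
        exact iff_of_false (gadget_not_adj_inr G A B i0 j0 hBne u)
          (gadget_not_adj_inr G A B i0 j0 hBne v)
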